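/- Let Φ be a unital positive linear map from B(𝓗) to B(𝓚), and A, B strictly positive operators with mA ≤ B ≤ MA for 0 < m < M, and p ≤ 0. Then Φ(A ♯_p B) ≤ C(m,M,p)·Φ(A) + Φ(A) ♯_p Φ(B), where C(m,M,p) = (M m^p - m M^p)/(M-m) + (p-1)·((M^p - m^p)/(p(M-m)))^(p/(p-1)) when m ≤ ((M^p - m^p)/(p(M-m)))^(1/(p-1)) ≤ M, and 0 otherwise. -/

import Mathlib

/-- The weighted geometric-type mean `A ♯_p B = A^(1/2) (A^(-1/2) B A^(-1/2))^p A^(1/2)`. -/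
noncomputable def sharpPow {H : Type*} [NormedAddCommGroup H] [InnerProductSpace ℂ H]
    [CompleteSpace H] (p : ℝ) (A B : H →L[ℂ] H) : H →L[ℂ] H :=
  cfc (fun t : ℝ => t ^ (1 / 2 : ℝ)) A *
    cfc (fun t : ℝ => t ^ p) (cfc (fun t : ℝ => t ^ (-(1 / 2) : ℝ)) A * B *
      cfc (fun t : ℝ => t ^ (-(1 / 2) : ℝ)) A) *
    cfc (fun t : ℝ => t ^ (1 / 2 : ℝ)) A


open Set
section ScalarLemmas

private lemma myConvexOn_rpow {p : ℝ} (hp : p ≤ 0) :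
    ConvexOn ℝ (Set.Ioi 0) (fun x : ℝ => x ^ p) := by
  apply convexOn_of_deriv2_nonneg (convex_Ioi 0)
  · exact ContinuousOn.rpow_const continuousOn_id fun x hx => Or.inl (ne_of_gt hx)
  · rw [interior_Ioi]
    exact fun x hx =>
      (Real.differentiableAt_rpow_const_of_ne p (ne_of_gt hx)).differentiableWithinAt
  · rw [interior_Ioi]
    apply DifferentiableOn.congr (f := fun x : ℝ => p * x ^ (p - 1))
    · exact fun x hx => ((Real.differentiableAt_rpow_const_of_ne (p - 1)
        (ne_of_gt hx)).const_mul p).differentiableWithinAt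
    · exact fun x hx => Real.deriv_rpow_const x p
  · rw [interior_Ioi]
    intro x hx
    have h1 : deriv (fun x : ℝ => x ^ p) =ᶠ[nhds x] fun x : ℝ => p * x ^ (p - 1) := by
      filter_upwards [Ioi_mem_nhds hx] with y hy
      exact Real.deriv_rpow_const y p
    have h2 : deriv^[2] (fun x : ℝ => x ^ p) x = p * ((p-1) * x ^ (p - 2)) := by
      simp only [Function.iterate_succ, Function.iterate_zero, Function.comp_apply, id_eq]
      rw [h1.deriv_eq, deriv_const_mul _ (Real.differentiableAt_rpow_const_of_ne _ (ne_of_gt hx)),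
        Real.deriv_rpow_const x (p - 1)]
      ring_nf
    rw [h2]
    have hxp : 0 < x ^ (p - 2) := Real.rpow_pos_of_pos hx _
    have hpp : 0 ≤ p * (p - 1) := mul_nonneg_of_nonpos_of_nonpos hp (by linarith)
    calc (0:ℝ) ≤ p * (p-1) * x ^ (p-2) := mul_nonneg hpp hxp.le
      _ = p * ((p - 1) * x ^ (p - 2)) := by ring

private lemma myTangent {p : ℝ} (hp : p ≤ 0) {t x : ℝ} (ht : 0 < t) (hx : 0 < x) :
    t ^ p + p * t ^ (p - 1) * (x - t) ≤ x ^ p := by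
  have hder : HasDerivAt (fun x : ℝ => x ^ p) (p * t ^ (p - 1)) t :=
    Real.hasDerivAt_rpow_const (Or.inl (ne_of_gt ht))
  have hc := myConvexOn_rpow hp
  rcases lt_trichotomy t x with h | h | h
  · have h2 := hc.le_slope_of_hasDerivAt ht hx h hder
    rw [slope_def_field] at h2
    have hxt : 0 < x - t := by linarith
    rw [le_div_iff₀ hxt] at h2
    nlinarith
  · simp [h]
  · have h2 := hc.slope_le_of_hasDerivAt hx ht h hder
    rw [slope_def_field] at h2
    have hxt : 0 < t - x := by linarith
    rw [div_le_iff₀ hxt] at h2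
    nlinarith

private lemma mySecant {p : ℝ} (hp : p ≤ 0) {m M x : ℝ} (hm : 0 < m) (hmM : m < M)
    (hx : x ∈ Set.Icc m M) :
    x ^ p ≤ (M * m ^ p - m * M ^ p) / (M - m) + (M ^ p - m ^ p) / (M - m) * x := by
  obtain ⟨hx1, hx2⟩ := hx
  have hMm : (0:ℝ) < M - m := by linarith
  have hc := myConvexOn_rpow hp
  have hlam0 : 0 ≤ (M - x) / (M - m) := div_nonneg (by linarith) hMm.le
  have hmu0 : 0 ≤ (x - m) / (M - m) := div_nonneg (by linarith) hMm.le
  have hsum : (M - x) / (M - m) + (x - m) / (M - m) = 1 := by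
    rw [← add_div]; field_simp; ring
  have hcomb : ((M - x) / (M - m)) * m + ((x - m) / (M - m)) * M = x := by
    field_simp; ring
  have h2 := hc.2 (mem_Ioi.mpr hm) (mem_Ioi.mpr (lt_trans hm hmM)) hlam0 hmu0 hsum
  simp only [smul_eq_mul, hcomb] at h2
  refine h2.trans (le_of_eq ?_)
  field_simp
  ring

private lemma scalar_final {p m M : ℝ} (hp : p ≤ 0) (hm : 0 < m) (hmM : m < M) (C : ℝ)
    (hC : C =
      if ((M ^ p - m ^ p) / (p * (M - m))) ^ (1 / (p - 1)) ∈ Set.Icc m M then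
        (M * m ^ p - m * M ^ p) / (M - m) +
          (p - 1) * ((M ^ p - m ^ p) / (p * (M - m))) ^ (p / (p - 1))
      else 0) :
    ∀ x ∈ Set.Icc m M,
      (M * m ^ p - m * M ^ p) / (M - m) + (M ^ p - m ^ p) / (M - m) * x ≤ C + x ^ p := by
  have hMm : (0:ℝ) < M - m := by linarith
  have hM : (0:ℝ) < M := lt_trans hm hmM
  rcases eq_or_lt_of_le hp with hp0 | hpneg
  · subst hp0
    intro x hx
    have hcond : ¬ (((M ^ (0:ℝ) - m ^ (0:ℝ)) / (0 * (M - m))) ^ (1 / ((0:ℝ) - 1)) ∈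
        Set.Icc m M) := by
      simp only [Real.rpow_zero, sub_self, zero_mul, div_zero]
      rw [Real.zero_rpow (by norm_num)]
      simp only [Set.mem_Icc, not_and_or]
      left; linarith
    rw [if_neg hcond] at hC
    subst hC
    simp only [Real.rpow_zero, sub_self, zero_div, zero_mul, add_zero, zero_add, mul_one]
    rw [div_self hMm.ne']
  · set b' : ℝ := (M ^ p - m ^ p) / (p * (M - m)) with hb'
    have hMp_lt : M ^ p < m ^ p := Real.rpow_lt_rpow_of_neg hm hmM hpneg
    have hb'pos : 0 < b' := by
      rw [hb']
      apply div_pos_of_neg_of_neg (by linarith)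
      exact mul_neg_of_neg_of_pos hpneg hMm
    have hp1 : p - 1 < 0 := by linarith
    have hp1ne : p - 1 ≠ 0 := ne_of_lt hp1
    have hpMm : p * (M - m) < 0 := mul_neg_of_neg_of_pos hpneg hMm
    set t0 : ℝ := b' ^ (1 / (p - 1)) with ht0
    have ht0pos : 0 < t0 := Real.rpow_pos_of_pos hb'pos _
    have ht0pow : t0 ^ (p - 1) = b' := by
      rw [ht0, ← Real.rpow_mul hb'pos.le]
      rw [one_div, inv_mul_cancel₀ hp1ne, Real.rpow_one]
    have hmpos : (0:ℝ) < m ^ (p-1) := Real.rpow_pos_of_pos hm _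
    have hub : b' ≤ m ^ (p - 1) := by
      have htan := myTangent hp hm hM
      rw [hb', div_le_iff_of_neg hpMm]
      nlinarith [htan]
    have hlb : M ^ (p - 1) ≤ b' := by
      have htan := myTangent hp hM hm
      rw [hb', le_div_iff_of_neg hpMm]
      nlinarith [htan]
    have hmem : t0 ∈ Set.Icc m M := by
      constructor
      · calc m = (m ^ (p-1)) ^ (1/(p-1)) := by
              rw [← Real.rpow_mul hm.le, mul_one_div, div_self hp1ne, Real.rpow_one]
          _ ≤ t0 := Real.rpow_le_rpow_of_nonpos hb'pos hub
              (by rw [one_div]; exact inv_nonpos.mpr hp1.le)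
      · calc t0 ≤ (M ^ (p-1)) ^ (1/(p-1)) :=
              Real.rpow_le_rpow_of_nonpos (Real.rpow_pos_of_pos hM _) hlb
                (by rw [one_div]; exact inv_nonpos.mpr hp1.le)
          _ = M := by rw [← Real.rpow_mul hM.le, mul_one_div, div_self hp1ne, Real.rpow_one]
    rw [if_pos hmem] at hC
    intro x hx
    have hxpos : 0 < x := lt_of_lt_of_le hm hx.1
    have htan := myTangent hp ht0pos hxpos
    have hpt0 : p * t0 ^ (p - 1) = (M ^ p - m ^ p) / (M - m) := by
      have hpne : p ≠ 0 := hpneg.ne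
      have hMmne : M - m ≠ 0 := hMm.ne'
      rw [ht0pow, hb']
      field_simp
    have ht0p : t0 ^ p = b' ^ (p / (p - 1)) := by
      rw [ht0, ← Real.rpow_mul hb'pos.le, one_div, inv_mul_eq_div]
    have hbt0 : (M ^ p - m ^ p) / (M - m) * t0 = p * t0 ^ p := by
      rw [← hpt0, mul_assoc]
      congr 1
      conv_lhs => rw [show t0 ^ (p-1) * t0 = t0 ^ (p-1) * t0 ^ (1:ℝ) by rw [Real.rpow_one]]
      rw [← Real.rpow_add ht0pos]
      norm_num
    rw [hpt0, mul_sub, hbt0] at htan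
    rw [hC, ← ht0p]
    linarith [htan]

end ScalarLemmas

section OperatorLemmas

variable {H : Type*} [NormedAddCommGroup H] [InnerProductSpace ℂ H] [CompleteSpace H]

private lemma contOn_rpow (p : ℝ) (s : Set ℝ) (hs : ∀ x ∈ s, x ≠ 0) :
    ContinuousOn (fun t : ℝ => t ^ p) s :=
  ContinuousOn.rpow_const continuousOn_id fun x hx => Or.inl (hs x hx)

private lemma spec_pos (A : H →L[ℂ] H) (hA0 : 0 ≤ A) (hAu : IsUnit A) :
    ∀ x ∈ spectrum ℝ A, 0 < x := by
  intro x hx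
  have h1 : 0 ≤ x := spectrum_nonneg_of_nonneg hA0 hx
  have h2 : x ≠ 0 := by
    rintro rfl
    exact spectrum.zero_notMem ℝ hAu hx
  exact h1.lt_of_ne' h2

private lemma sqrt_mul_sqrt' (A : H →L[ℂ] H) (hA0 : 0 ≤ A) (hAu : IsUnit A) :
    cfc (fun t : ℝ => t ^ (1 / 2 : ℝ)) A * cfc (fun t : ℝ => t ^ (1 / 2 : ℝ)) A = A := by
  have hspec := spec_pos A hA0 hAu
  have hc := contOn_rpow (1/2 : ℝ) (spectrum ℝ A) (fun x hx => (hspec x hx).ne')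
  rw [← cfc_mul _ _ A hc hc]
  rw [cfc_congr (g := id) fun x hx => ?_, cfc_id ℝ A]
  have := hspec x hx
  rw [← Real.rpow_add this]
  norm_num

private lemma isqrt_mul_sqrt (A : H →L[ℂ] H) (hA0 : 0 ≤ A) (hAu : IsUnit A) :
    cfc (fun t : ℝ => t ^ (-(1 / 2) : ℝ)) A * cfc (fun t : ℝ => t ^ (1 / 2 : ℝ)) A = 1 := by
  have hspec := spec_pos A hA0 hAu
  have hc1 := contOn_rpow (-(1/2) : ℝ) (spectrum ℝ A) (fun x hx => (hspec x hx).ne')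
  have hc2 := contOn_rpow (1/2 : ℝ) (spectrum ℝ A) (fun x hx => (hspec x hx).ne')
  rw [← cfc_mul _ _ A hc1 hc2]
  rw [cfc_congr (g := fun _ => (1:ℝ)) fun x hx => ?_, cfc_const 1 A, map_one]
  have := hspec x hx
  rw [← Real.rpow_add this]
  norm_num

private lemma sqrt_mul_isqrt (A : H →L[ℂ] H) (hA0 : 0 ≤ A) (hAu : IsUnit A) :
    cfc (fun t : ℝ => t ^ (1 / 2 : ℝ)) A * cfc (fun t : ℝ => t ^ (-(1 / 2) : ℝ)) A = 1 := by
  have hspec := spec_pos A hA0 hAu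
  have hc1 := contOn_rpow (-(1/2) : ℝ) (spectrum ℝ A) (fun x hx => (hspec x hx).ne')
  have hc2 := contOn_rpow (1/2 : ℝ) (spectrum ℝ A) (fun x hx => (hspec x hx).ne')
  rw [← cfc_mul _ _ A hc2 hc1]
  rw [cfc_congr (g := fun _ => (1:ℝ)) fun x hx => ?_, cfc_const 1 A, map_one]
  have := hspec x hx
  rw [← Real.rpow_add this]
  norm_num

variable (A B : H →L[ℂ] H)

local notation "S" => cfc (fun t : ℝ => t ^ (1 / 2 : ℝ)) A
local notation "Si" => cfc (fun t : ℝ => t ^ (-(1 / 2) : ℝ)) A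
local notation "X" => cfc (fun t : ℝ => t ^ (-(1 / 2) : ℝ)) A * B *
  cfc (fun t : ℝ => t ^ (-(1 / 2) : ℝ)) A

private lemma isqrt_conj_self (hA0 : 0 ≤ A) (hAu : IsUnit A) : Si * A * Si = 1 := by
  have key : Si * (S * S) * Si = 1 := by
    calc Si * (S * S) * Si = (Si * S) * (S * Si) := by simp only [mul_assoc]
      _ = 1 := by rw [isqrt_mul_sqrt A hA0 hAu, sqrt_mul_isqrt A hA0 hAu, one_mul]
  rw [sqrt_mul_sqrt' A hA0 hAu] at key
  exact key

private lemma sqrt_conj_X (hA0 : 0 ≤ A) (hAu : IsUnit A) : S * X * S = B := by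
  calc S * (Si * B * Si) * S = (S * Si) * (B * (Si * S)) := by simp only [mul_assoc]
    _ = B := by rw [isqrt_mul_sqrt A hA0 hAu, sqrt_mul_isqrt A hA0 hAu, mul_one, one_mul]

private lemma X_selfAdjoint (hB0 : 0 ≤ B) : IsSelfAdjoint (X) := by
  have hSi : IsSelfAdjoint (Si) := cfc_predicate _ A
  have hB : IsSelfAdjoint B := .of_nonneg hB0
  rw [IsSelfAdjoint, star_mul, star_mul, hSi.star_eq, hB.star_eq, mul_assoc]

private lemma X_spectrum (hA0 : 0 ≤ A) (hAu : IsUnit A) (hB0 : 0 ≤ B)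
    {m M : ℝ} (h1 : m • A ≤ B) (h2 : B ≤ M • A) :
    spectrum ℝ (X) ⊆ Set.Icc m M := by
  have hSi : IsSelfAdjoint (Si) := cfc_predicate _ A
  have hconj : Si * A * Si = 1 := isqrt_conj_self A hA0 hAu
  have hXsa := X_selfAdjoint A B hB0
  have hlow : algebraMap ℝ (H →L[ℂ] H) m ≤ X := by
    have hcc := star_left_conjugate_le_conjugate h1 (Si)
    rw [hSi.star_eq] at hcc
    refine le_trans (le_of_eq ?_) hcc
    rw [Algebra.algebraMap_eq_smul_one, ← hconj]
    simp only [smul_mul_assoc, mul_smul_comm]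
  have hhigh : X ≤ algebraMap ℝ (H →L[ℂ] H) M := by
    have hcc := star_left_conjugate_le_conjugate h2 (Si)
    rw [hSi.star_eq] at hcc
    refine le_trans hcc (le_of_eq ?_)
    rw [Algebra.algebraMap_eq_smul_one, ← hconj]
    simp only [smul_mul_assoc, mul_smul_comm]
  intro x hx
  exact ⟨(algebraMap_le_iff_le_spectrum hXsa).mp hlow x hx,
    (le_algebraMap_iff_spectrum_le hXsa).mp hhigh x hx⟩

private lemma key_eval (hA0 : 0 ≤ A) (hAu : IsUnit A) (hB0 : 0 ≤ B) (α β : ℝ) :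
    S * cfc (fun x : ℝ => α + β * x) (X) * S = α • A + β • B := by
  have hXsa := X_selfAdjoint A B hB0
  rw [cfc_const_add α (fun x : ℝ => β * x) (X) (by fun_prop) hXsa,
    cfc_const_mul_id β (X) hXsa]
  rw [Algebra.algebraMap_eq_smul_one]
  rw [mul_add, add_mul]
  congr 1
  · calc S * (α • 1) * S = α • (S * S) := by
          simp only [mul_smul_comm, smul_mul_assoc, mul_one]
      _ = α • A := by rw [sqrt_mul_sqrt' A hA0 hAu]
  · calc S * (β • (X)) * S = β • (S * (X) * S) := by
          simp only [mul_smul_comm, smul_mul_assoc]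
      _ = β • B := by rw [sqrt_conj_X A B hA0 hAu]

private lemma key_le (hA0 : 0 ≤ A) (hAu : IsUnit A) (hB0 : 0 ≤ B)
    {m M : ℝ} (hm : 0 < m) (h1 : m • A ≤ B) (h2 : B ≤ M • A)
    (p α β : ℝ) (hpt : ∀ x ∈ Set.Icc m M, x ^ p ≤ α + β * x) :
    sharpPow p A B ≤ α • A + β • B := by
  have hspecX := X_spectrum A B hA0 hAu hB0 h1 h2
  have hXpos : ∀ x ∈ spectrum ℝ (X), (0:ℝ) < x :=
    fun x hx => lt_of_lt_of_le hm (hspecX hx).1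
  have hXsa := X_selfAdjoint A B hB0
  have hcf : ContinuousOn (fun t : ℝ => t ^ p) (spectrum ℝ (X)) :=
    contOn_rpow p _ fun x hx => (hXpos x hx).ne'
  have hcg : ContinuousOn (fun x : ℝ => α + β * x) (spectrum ℝ (X)) := by fun_prop
  have hmono : cfc (fun t : ℝ => t ^ p) (X) ≤ cfc (fun x : ℝ => α + β * x) (X) :=
    cfc_mono (fun x hx => hpt x (hspecX hx)) hcf hcg
  have hS : IsSelfAdjoint (S) := cfc_predicate _ A
  have hconj := star_left_conjugate_le_conjugate hmono (S)
  rw [hS.star_eq, key_eval A B hA0 hAu hB0 α β] at hconj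
  exact hconj

private lemma key_ge (hA0 : 0 ≤ A) (hAu : IsUnit A) (hB0 : 0 ≤ B)
    {m M : ℝ} (hm : 0 < m) (h1 : m • A ≤ B) (h2 : B ≤ M • A)
    (p α β γ : ℝ) (hpt : ∀ x ∈ Set.Icc m M, α + β * x ≤ γ + x ^ p) :
    α • A + β • B ≤ γ • A + sharpPow p A B := by
  have hspecX := X_spectrum A B hA0 hAu hB0 h1 h2
  have hXpos : ∀ x ∈ spectrum ℝ (X), (0:ℝ) < x :=
    fun x hx => lt_of_lt_of_le hm (hspecX hx).1
  have hXsa := X_selfAdjoint A B hB0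
  have hcf : ContinuousOn (fun t : ℝ => t ^ p) (spectrum ℝ (X)) :=
    contOn_rpow p _ fun x hx => (hXpos x hx).ne'
  have hcg : ContinuousOn (fun x : ℝ => γ + x ^ p) (spectrum ℝ (X)) :=
    (continuousOn_const).add hcf
  have hca : ContinuousOn (fun x : ℝ => α + β * x) (spectrum ℝ (X)) := by fun_prop
  have hmono : cfc (fun x : ℝ => α + β * x) (X) ≤ cfc (fun x : ℝ => γ + x ^ p) (X) :=
    cfc_mono (fun x hx => hpt x (hspecX hx)) hca hcg
  have hS : IsSelfAdjoint (S) := cfc_predicate _ A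
  have hconj := star_left_conjugate_le_conjugate hmono (S)
  rw [hS.star_eq, key_eval A B hA0 hAu hB0 α β] at hconj
  refine hconj.trans (le_of_eq ?_)
  rw [cfc_const_add γ (fun x : ℝ => x ^ p) (X) hcf hXsa]
  rw [Algebra.algebraMap_eq_smul_one, mul_add, add_mul]
  congr 1
  calc S * (γ • 1) * S = γ • (S * S) := by
        simp only [mul_smul_comm, smul_mul_assoc, mul_one]
    _ = γ • A := by rw [sqrt_mul_sqrt' A hA0 hAu]

end OperatorLemmas

/-- Difference-type reverse of `Φ(A) ♯_p Φ(B) ≤ Φ(A ♯_p B)` for `p ≤ 0`. -/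
theorem stmt_16 {H K : Type*}
    [NormedAddCommGroup H] [InnerProductSpace ℂ H] [CompleteSpace H]
    [NormedAddCommGroup K] [InnerProductSpace ℂ K] [CompleteSpace K]
    (Φ : (H →L[ℂ] H) →ₗ[ℂ] (K →L[ℂ] K))
    (hΦpos : ∀ T : H →L[ℂ] H, 0 ≤ T → 0 ≤ Φ T) (hΦunital : Φ 1 = 1)
    (A B : H →L[ℂ] H) (hA0 : 0 ≤ A) (hAu : IsUnit A) (hB0 : 0 ≤ B) (hBu : IsUnit B)
    (m M : ℝ) (hm : 0 < m) (hmM : m < M)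
    (hmA : m • A ≤ B) (hBM : B ≤ M • A)
    (p : ℝ) (hp : p ≤ 0) (C : ℝ)
    (hC : C =
      if ((M ^ p - m ^ p) / (p * (M - m))) ^ (1 / (p - 1)) ∈ Set.Icc m M then
        (M * m ^ p - m * M ^ p) / (M - m) +
          (p - 1) * ((M ^ p - m ^ p) / (p * (M - m))) ^ (p / (p - 1))
      else 0) :
    Φ (sharpPow p A B) ≤ C • Φ A + sharpPow p (Φ A) (Φ B) := by
  rcases subsingleton_or_nontrivial (H →L[ℂ] H) with hsub | hnontriv
  · have h10 : (1 : K →L[ℂ] K) = 0 := by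
      rw [← hΦunital, Subsingleton.elim (1 : H →L[ℂ] H) 0, map_zero]
    have : Subsingleton (K →L[ℂ] K) := subsingleton_of_zero_eq_one h10.symm
    exact le_of_eq (Subsingleton.elim _ _)
  set a : ℝ := (M * m ^ p - m * M ^ p) / (M - m) with ha
  set b : ℝ := (M ^ p - m ^ p) / (M - m) with hb
  have hΦmono : ∀ {T U : H →L[ℂ] H}, T ≤ U → Φ T ≤ Φ U := by
    intro T U h
    have h2 := hΦpos _ (sub_nonneg.mpr h)
    rw [map_sub] at h2
    exact sub_nonneg.mp h2
  have hΦsmul : ∀ (r : ℝ) (T : H →L[ℂ] H), Φ (r • T) = r • Φ T := by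
    intro r T
    rw [← algebraMap_smul ℂ r T, map_smul, algebraMap_smul]
  have hA'0 : 0 ≤ Φ A := hΦpos A hA0
  have hB'0 : 0 ≤ Φ B := hΦpos B hB0
  have hA'sa : IsSelfAdjoint (Φ A) := .of_nonneg hA'0
  have hAsa : IsSelfAdjoint A := .of_nonneg hA0
  have hA'u : IsUnit (Φ A) := by
    obtain ⟨r, hr, hrA⟩ := (CFC.exists_pos_algebraMap_le_iff (a := A) hAsa).mpr
      (spec_pos A hA0 hAu)
    have hrA' : algebraMap ℝ (K →L[ℂ] K) r ≤ Φ A := by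
      have := hΦmono hrA
      rwa [Algebra.algebraMap_eq_smul_one, hΦsmul, hΦunital,
        ← Algebra.algebraMap_eq_smul_one] at this
    have hsp := (algebraMap_le_iff_le_spectrum hA'sa).mp hrA'
    rw [← spectrum.zero_notMem_iff ℝ]
    intro h0
    exact absurd (hsp 0 h0) (by linarith)
  have hmA' : m • Φ A ≤ Φ B := by
    have := hΦmono hmA
    rwa [hΦsmul] at this
  have hBM' : Φ B ≤ M • Φ A := by
    have := hΦmono hBM
    rwa [hΦsmul] at this
  have step1 : sharpPow p A B ≤ a • A + b • B :=
    key_le A B hA0 hAu hB0 hm hmA hBM p a b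
      (fun x hx => mySecant hp hm hmM hx)
  have step2 : Φ (sharpPow p A B) ≤ a • Φ A + b • Φ B := by
    refine (hΦmono step1).trans (le_of_eq ?_)
    rw [map_add, hΦsmul, hΦsmul]
  have step3 : a • Φ A + b • Φ B ≤ C • Φ A + sharpPow p (Φ A) (Φ B) :=
    key_ge (Φ A) (Φ B) hA'0 hA'u hB'0 hm hmA' hBM' p a b C
      (scalar_final hp hm hmM C hC)
  exact step2.trans step3
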